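/- Integrated shifted-ratio estimate on the torus (Step 4 of the proof of Theorem 3.1, integrated form): Let c ≥ 1, let p, q : ℝ^d → ℝ be measurable, (2L)ℤ^d-periodic, with 1/c ≤ p(x) ≤ c and 1/c ≤ q(x) ≤ c for all x, and let a ∈ ℝ^d. Then ∫_Q | p(x − a)/p(x) − q(x − a)/q(x) |² p(x) dx ≤ 4 c⁷ ∫_Q |p(x) − q(x)|² dx, where Q = [−L, L)^d. -/

import Mathlib

open MeasureTheory Pointwise

/-- The fundamental domain `Q = [-L, L)^d` of the torus of side `2L`. -/
def fundDomain (d : ℕ) (L : ℝ) : Set (EuclideanSpace ℝ (Fin d)) :=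
  {x | ∀ i, -L ≤ x i ∧ x i < L}

/-- A function on `ℝ^d` is `(2L)ℤ^d`-periodic. -/
def IsPeriodic {α : Type*} (d : ℕ) (L : ℝ) (f : EuclideanSpace ℝ (Fin d) → α) : Prop :=
  ∀ (x : EuclideanSpace ℝ (Fin d)) (m : Fin d → ℤ),
    f (x + ∑ i, ((2 * L) * (m i : ℝ)) • EuclideanSpace.single i (1 : ℝ)) = f x

noncomputable def bb (d : ℕ) (L : ℝ) (hL : L ≠ 0) : Module.Basis (Fin d) ℝ (EuclideanSpace ℝ (Fin d)) :=
  ((EuclideanSpace.basisFun (Fin d) ℝ).toBasis).unitsSMul (fun _ => Units.mk0 (2*L) (by simp [hL]))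

lemma bb_repr (d : ℕ) (L : ℝ) (hL : L ≠ 0) (x : EuclideanSpace ℝ (Fin d)) (i : Fin d) :
    (bb d L hL).repr x i = (2*L)⁻¹ * x i := by
  simp [bb, Module.Basis.repr_unitsSMul, Units.smul_def, smul_eq_mul]

lemma periodic_invariant {α : Type*} {d : ℕ} {L : ℝ} (hL : L ≠ 0)
    {f : EuclideanSpace ℝ (Fin d) → α} (hf : IsPeriodic d L f)
    (g : (Submodule.span ℤ (Set.range (bb d L hL))).toAddSubgroup)
    (x : EuclideanSpace ℝ (Fin d)) : f (g +ᵥ x) = f x := by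
  obtain ⟨g, hg⟩ := g
  show f ((g : EuclideanSpace ℝ (Fin d)) +ᵥ x) = f x
  rw [Submodule.mem_toAddSubgroup, Submodule.mem_span_range_iff_exists_fun] at hg
  obtain ⟨m, hm⟩ := hg
  have : (g : EuclideanSpace ℝ (Fin d)) +ᵥ x
      = x + ∑ i, ((2 * L) * (m i : ℝ)) • EuclideanSpace.single i (1 : ℝ) := by
    rw [← hm]
    simp only [vadd_eq_add, add_comm]
    congr 1
    refine Finset.sum_congr rfl fun i _ => ?_
    rw [show (bb d L hL) i = (2*L) • EuclideanSpace.single i 1 by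
      simp [bb, Module.Basis.unitsSMul_apply, Units.smul_def]]
    rw [← Int.cast_smul_eq_zsmul ℝ, smul_smul]
    ring_nf
  rw [this, hf]

def negLvec (d : ℕ) (L : ℝ) : EuclideanSpace ℝ (Fin d) := WithLp.toLp 2 (fun _ => -L)

lemma fundDomain_eq (d : ℕ) {L : ℝ} (hL : 0 < L) :
    fundDomain d L =
      negLvec d L +ᵥ ZSpan.fundamentalDomain (bb d L hL.ne') := by
  ext x
  rw [Set.mem_vadd_set_iff_neg_vadd_mem]
  simp only [ZSpan.mem_fundamentalDomain, Set.mem_Ico, bb_repr, fundDomain, Set.mem_setOf_eq]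
  have h2L : (0:ℝ) < 2*L := by linarith
  constructor
  · intro h i
    have := h i
    have hx : ((-(negLvec d L) +ᵥ x) : EuclideanSpace ℝ (Fin d)) i
        = x i + L := by
      simp [vadd_eq_add, negLvec]; ring
    rw [hx]
    have hinv : (0:ℝ) < (2*L)⁻¹ := by positivity
    have hcan : (2*L) * (2*L)⁻¹ = 1 := mul_inv_cancel₀ h2L.ne'
    constructor
    · exact mul_nonneg hinv.le (by linarith [this.1])
    · nlinarith [this.2, mul_lt_mul_of_pos_left (show x i + L < 2*L by linarith [this.2]) hinv]
  · intro h i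
    have hx : ((-(negLvec d L) +ᵥ x) : EuclideanSpace ℝ (Fin d)) i = x i + L := by
      simp [vadd_eq_add, negLvec]; ring
    have h' := h i
    rw [hx] at h'
    have hcan : (2*L) * (2*L)⁻¹ = 1 := mul_inv_cancel₀ h2L.ne'
    constructor
    · nlinarith [h'.1, mul_le_mul_of_nonneg_left h'.1 h2L.le]
    · nlinarith [h'.2, mul_lt_mul_of_pos_left h'.2 h2L]

lemma isFD (d : ℕ) {L : ℝ} (hL : 0 < L) (v : EuclideanSpace ℝ (Fin d)) :
    IsAddFundamentalDomain (Submodule.span ℤ (Set.range (bb d L hL.ne'))).toAddSubgroup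
      (v +ᵥ fundDomain d L) volume := by
  rw [fundDomain_eq d hL, vadd_vadd]
  exact (ZSpan.isAddFundamentalDomain' (bb d L hL.ne') volume).vadd_of_comm _

lemma shift_integral (d : ℕ) {L : ℝ} (hL : 0 < L) (f : EuclideanSpace ℝ (Fin d) → ℝ)
    (hf : IsPeriodic d L f) (a : EuclideanSpace ℝ (Fin d)) :
    ∫ x in fundDomain d L, f (x - a) = ∫ x in fundDomain d L, f x := by
  have hQ : IsAddFundamentalDomain (Submodule.span ℤ (Set.range (bb d L hL.ne'))).toAddSubgroup
      (fundDomain d L) volume := by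
    have := isFD d hL 0; rwa [zero_vadd] at this
  have hQ' := isFD d hL a
  have hinv : ∀ (γ : (Submodule.span ℤ (Set.range (bb d L hL.ne'))).toAddSubgroup)
      (x : EuclideanSpace ℝ (Fin d)), f ((γ +ᵥ x) - a) = f (x - a) := by
    intro γ x
    have : (γ +ᵥ x) - a = γ +ᵥ (x - a) := by
      show ((γ : EuclideanSpace ℝ (Fin d)) + x) - a = (γ : EuclideanSpace ℝ (Fin d)) + (x - a)
      abel
    rw [this, periodic_invariant hL.ne' hf]
  have : Countable ((Submodule.span ℤ (Set.range (bb d L hL.ne'))).toAddSubgroup) :=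
    inferInstanceAs (Countable (Submodule.span ℤ (Set.range (bb d L hL.ne'))))
  have step1 : ∫ x in fundDomain d L, f (x - a) = ∫ x in a +ᵥ fundDomain d L, f (x - a) :=
    hQ.setIntegral_eq hQ' hinv
  have step2 : ∫ x in a +ᵥ fundDomain d L, f (x - a) = ∫ x in fundDomain d L, f x := by
    have hemb : MeasurableEmbedding (fun x : EuclideanSpace ℝ (Fin d) => a + x) :=
      (MeasurableEquiv.addLeft a).measurableEmbedding
    have hmp : MeasurePreserving (fun x : EuclideanSpace ℝ (Fin d) => a + x) volume volume :=
      measurePreserving_add_left volume a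
    have himg : a +ᵥ fundDomain d L
        = (fun x : EuclideanSpace ℝ (Fin d) => a + x) '' fundDomain d L := rfl
    rw [himg, hmp.setIntegral_image_emb hemb]
    simp
  rw [step1, step2]

lemma measurableSet_fundDomain (d : ℕ) (L : ℝ) : MeasurableSet (fundDomain d L) := by
  have : fundDomain d L = ⋂ i, (fun x : EuclideanSpace ℝ (Fin d) => x i) ⁻¹' Set.Ico (-L) L := by
    ext x; simp [fundDomain, Set.mem_Ico]
  rw [this]
  exact MeasurableSet.iInter fun i =>
    ((EuclideanSpace.proj i : EuclideanSpace ℝ (Fin d) →L[ℝ] ℝ).continuous.measurable)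
      measurableSet_Ico

lemma volume_fundDomain_lt_top (d : ℕ) {L : ℝ} (hL : 0 < L) :
    volume (fundDomain d L) < ⊤ := by
  have hsub : fundDomain d L ⊆ Metric.closedBall 0 (Real.sqrt d * L) := by
    intro x hx
    rw [Metric.mem_closedBall, dist_zero_right, EuclideanSpace.norm_eq]
    have : ∑ i, ‖x i‖ ^ 2 ≤ ∑ _i : Fin d, L ^ 2 := by
      refine Finset.sum_le_sum fun i _ => ?_
      rw [Real.norm_eq_abs, sq_abs]
      have := hx i
      nlinarith [this.1, this.2]
    calc Real.sqrt (∑ i, ‖x i‖ ^ 2) ≤ Real.sqrt (∑ _i : Fin d, L ^ 2) := Real.sqrt_le_sqrt this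
      _ = Real.sqrt d * L := by
        rw [Finset.sum_const, Finset.card_univ, Fintype.card_fin, nsmul_eq_mul,
          Real.sqrt_mul (by positivity), Real.sqrt_sq hL.le]
  exact lt_of_le_of_lt (measure_mono hsub) measure_closedBall_lt_top

lemma integrableOn_of_bounded' {d : ℕ} {L : ℝ} (hL : 0 < L)
    {f : EuclideanSpace ℝ (Fin d) → ℝ} (hf : Measurable f) {M : ℝ}
    (hM : ∀ x, |f x| ≤ M) : IntegrableOn f (fundDomain d L) volume := by
  haveI : IsFiniteMeasure (volume.restrict (fundDomain d L)) :=
    ⟨by rw [Measure.restrict_apply_univ]; exact volume_fundDomain_lt_top d hL⟩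
  refine ⟨hf.aestronglyMeasurable, HasFiniteIntegral.of_bounded (C := M) ?_⟩
  filter_upwards with x using (by rw [Real.norm_eq_abs]; exact hM x)

lemma ratio_bound {c A B A' B' : ℝ} (hc : 1 ≤ c)
    (hA1 : 1/c ≤ A) (hA2 : A ≤ c) (hB1 : 1/c ≤ B) (hB2 : B ≤ c)
    (hA1' : 1/c ≤ A') (hA2' : A' ≤ c) (hB1' : 1/c ≤ B') (hB2' : B' ≤ c) :
    |A/B - A'/B'| ^ 2 * B ≤ 2 * c^7 * (|A - A'| ^ 2 + |B - B'| ^ 2) := by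
  have hc0 : (0:ℝ) < c := by linarith
  have hinv : (0:ℝ) < 1/c := by positivity
  have hB : 0 < B := lt_of_lt_of_le hinv hB1
  have hB' : 0 < B' := lt_of_lt_of_le hinv hB1'
  have hsplit : A/B - A'/B' = ((A - A')*B' + A'*(B' - B))/(B*B') := by
    field_simp; ring
  have hnum : |(A - A')*B' + A'*(B' - B)| ≤ c * |A - A'| + c * |B - B'| := by
    calc |(A - A')*B' + A'*(B' - B)| ≤ |(A - A')*B'| + |A'*(B' - B)| := abs_add_le _ _
      _ = |A - A'| * |B'| + |A'| * |B' - B| := by rw [abs_mul, abs_mul]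
      _ ≤ |A - A'| * c + c * |B' - B| := by
          have h1 : |B'| ≤ c := by rw [abs_of_pos hB']; exact hB2'
          have h2 : |A'| ≤ c := by
            rw [abs_of_pos (lt_of_lt_of_le hinv hA1')]; exact hA2'
          have := abs_nonneg (A - A'); have := abs_nonneg (B' - B)
          nlinarith [abs_nonneg (A - A'), abs_nonneg (B' - B)]
      _ = c * |A - A'| + c * |B - B'| := by rw [abs_sub_comm B' B]; ring
  have hden : (1:ℝ)/c^2 ≤ B * B' := by
    calc (1:ℝ)/c^2 = (1/c) * (1/c) := by ring
      _ ≤ B * B' := mul_le_mul hB1 hB1' hinv.le hB.le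
  have hBB' : 0 < B * B' := mul_pos hB hB'
  have key : |A/B - A'/B'| ≤ c^3 * (|A - A'| + |B - B'|) := by
    rw [hsplit, abs_div, abs_of_pos hBB', div_le_iff₀ hBB']
    calc |(A - A')*B' + A'*(B' - B)| ≤ c * |A - A'| + c * |B - B'| := hnum
      _ = c * (|A - A'| + |B - B'|) := by ring
      _ ≤ c^3 * (|A - A'| + |B - B'|) * (B * B') := by
          have habs : 0 ≤ |A - A'| + |B - B'| := by positivity
          have h2 := mul_le_mul_of_nonneg_left hden
            (by positivity : (0:ℝ) ≤ c^3 * (|A - A'| + |B - B'|))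
          have h1 : c^3 * (|A - A'| + |B - B'|) * (1/c^2) = c * (|A - A'| + |B - B'|) := by
            field_simp
          linarith
  have hsq : |A/B - A'/B'| ^ 2 ≤ (c^3 * (|A - A'| + |B - B'|)) ^ 2 :=
    pow_le_pow_left₀ (abs_nonneg _) key 2
  have hfinal : (c^3 * (|A - A'| + |B - B'|)) ^ 2 * c ≤ 2 * c^7 * (|A - A'|^2 + |B - B'|^2) := by
    have h2 : (|A - A'| + |B - B'|)^2 ≤ 2 * (|A - A'|^2 + |B - B'|^2) := by
      nlinarith [sq_nonneg (|A - A'| - |B - B'|)]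
    nlinarith [pow_pos hc0 6, sq_nonneg (|A - A'| + |B - B'|), pow_pos hc0 7]
  calc |A/B - A'/B'| ^ 2 * B ≤ (c^3 * (|A - A'| + |B - B'|)) ^ 2 * c := by
        nlinarith [sq_nonneg (A/B - A'/B'), sq_abs (A/B - A'/B'), hsq, hB2, hB,
          sq_nonneg (c^3 * (|A - A'| + |B - B'|))]
    _ ≤ 2 * c^7 * (|A - A'|^2 + |B - B'|^2) := hfinal

theorem integrated_shifted_ratio_estimate (d : ℕ) (L c : ℝ) (hL : 0 < L) (hc : 1 ≤ c)
    (p q : EuclideanSpace ℝ (Fin d) → ℝ) (hpm : Measurable p) (hqm : Measurable q)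
    (hp_per : IsPeriodic d L p) (hq_per : IsPeriodic d L q)
    (hp : ∀ x, 1 / c ≤ p x ∧ p x ≤ c) (hq : ∀ x, 1 / c ≤ q x ∧ q x ≤ c)
    (a : EuclideanSpace ℝ (Fin d)) :
    ∫ x in fundDomain d L, |p (x - a) / p x - q (x - a) / q x| ^ 2 * p x ≤
      4 * c ^ 7 * ∫ x in fundDomain d L, |p x - q x| ^ 2 := by
  have hc0 : (0:ℝ) < c := by linarith
  set G : EuclideanSpace ℝ (Fin d) → ℝ := fun x => |p x - q x| ^ 2 with hG
  set F : EuclideanSpace ℝ (Fin d) → ℝ :=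
    fun x => |p (x - a) / p x - q (x - a) / q x| ^ 2 * p x with hF
  have hsubm : Measurable fun x : EuclideanSpace ℝ (Fin d) => x - a :=
    measurable_id.sub measurable_const
  have hFm : Measurable F := by
    apply Measurable.mul _ hpm
    apply Measurable.pow _ measurable_const
    exact ((hpm.comp hsubm).div hpm).sub ((hqm.comp hsubm).div hqm) |>.abs
  have hGm : Measurable G := ((hpm.sub hqm).abs.pow measurable_const)
  have hGam : Measurable fun x => G (x - a) := hGm.comp hsubm
  -- bounds
  have hGbd : ∀ x, |G x| ≤ (2*c)^2 := by
    intro x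
    have h1 := (hp x).1; have h2 := (hp x).2; have h3 := (hq x).1; have h4 := (hq x).2
    have hinv : (0:ℝ) < 1/c := by positivity
    have habs : |p x - q x| ≤ 2*c := by
      rw [abs_le]; constructor <;> nlinarith
    show |(|p x - q x| ^ 2)| ≤ (2*c)^2
    rw [abs_of_nonneg (by positivity)]
    exact pow_le_pow_left₀ (abs_nonneg _) habs 2
  have hFbd : ∀ x, |F x| ≤ (2*c^2)^2 * c := by
    intro x
    have h1 := (hp x).1; have h2 := (hp x).2
    have hinv : (0:ℝ) < 1/c := by positivity
    have hpx : 0 < p x := lt_of_lt_of_le hinv h1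
    rw [hF, abs_of_nonneg (by positivity)]
    have hr : |p (x - a) / p x - q (x - a) / q x| ≤ 2*c^2 := by
      have hqx : 0 < q x := lt_of_lt_of_le hinv (hq x).1
      have e1 : |p (x - a) / p x| ≤ c^2 := by
        rw [abs_div, abs_of_pos hpx, abs_of_pos (lt_of_lt_of_le hinv (hp (x-a)).1),
          div_le_iff₀ hpx]
        have hcp : 1 ≤ c * p x := by
          have := mul_le_mul_of_nonneg_left h1 hc0.le
          rwa [mul_one_div_cancel hc0.ne'] at this
        nlinarith [(hp (x-a)).2, hcp, hc0]
      have e2 : |q (x - a) / q x| ≤ c^2 := by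
        rw [abs_div, abs_of_pos hqx, abs_of_pos (lt_of_lt_of_le hinv (hq (x-a)).1),
          div_le_iff₀ hqx]
        have hcq : 1 ≤ c * q x := by
          have := mul_le_mul_of_nonneg_left (hq x).1 hc0.le
          rwa [mul_one_div_cancel hc0.ne'] at this
        nlinarith [(hq (x-a)).2, hcq, hc0]
      calc |p (x - a) / p x - q (x - a) / q x| ≤ |p (x-a)/p x| + |q (x-a)/q x| := abs_sub _ _
        _ ≤ 2*c^2 := by linarith
    nlinarith [abs_nonneg (p (x - a) / p x - q (x - a) / q x), sq_nonneg (2*c^2),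
      mul_le_mul_of_nonneg_right (pow_le_pow_left₀ (abs_nonneg _) hr 2) hpx.le,
      mul_le_mul_of_nonneg_left h2 (sq_nonneg (2*c^2))]
  -- integrability
  have hFint : IntegrableOn F (fundDomain d L) volume := integrableOn_of_bounded' hL hFm hFbd
  have hGint : IntegrableOn G (fundDomain d L) volume := integrableOn_of_bounded' hL hGm hGbd
  have hGaint : IntegrableOn (fun x => G (x - a)) (fundDomain d L) volume :=
    integrableOn_of_bounded' hL hGam (fun x => hGbd (x - a))
  have hRHSint : IntegrableOn (fun x => 2*c^7 * (G (x - a) + G x)) (fundDomain d L) volume :=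
    ((hGaint.add hGint).const_mul _)
  -- periodicity of G
  have hGper : IsPeriodic d L G := by
    intro x m; simp only [hG, hp_per x m, hq_per x m]
  -- pointwise bound
  have hpt : ∀ x ∈ fundDomain d L, F x ≤ 2*c^7 * (G (x - a) + G x) := by
    intro x _
    have := ratio_bound hc (hp (x-a)).1 (hp (x-a)).2 (hp x).1 (hp x).2
      (hq (x-a)).1 (hq (x-a)).2 (hq x).1 (hq x).2
    simpa [hF, hG, mul_add] using this
  calc ∫ x in fundDomain d L, F x ≤ ∫ x in fundDomain d L, 2*c^7 * (G (x - a) + G x) :=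
        setIntegral_mono_on hFint hRHSint (measurableSet_fundDomain d L) hpt
    _ = 2*c^7 * ((∫ x in fundDomain d L, G (x - a)) + ∫ x in fundDomain d L, G x) := by
        rw [integral_const_mul, integral_add hGaint hGint]
    _ = 2*c^7 * ((∫ x in fundDomain d L, G x) + ∫ x in fundDomain d L, G x) := by
        rw [shift_integral d hL G hGper a]
    _ = 4 * c ^ 7 * ∫ x in fundDomain d L, G x := by ring
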